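/- For every K > 0 there exists δ₀ > 0 such that for every δ ∈ (0, δ₀] there exists an integer n₀ with the following property: if G is an oriented graph on n ≥ n₀ vertices with σ₊₋(G) ≥ (3n+2)/4 and (A,B,C,D) is a (δ,K)-nice partition of G, then G contains two special arcs for (A,B,C,D) that share no endpoint. -/

import Mathlib

open Set

section Defs

variable {V : Type*}

/-- Out-degree of `v` in the digraph `G`. -/
noncomputable def outdeg (G : V → V → Prop) (v : V) : ℕ := {u | G v u}.ncard

/-- In-degree of `v` in the digraph `G`. -/
noncomputable def indeg (G : V → V → Prop) (v : V) : ℕ := {u | G u v}.ncard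

/-- Number of out-neighbours of `v` inside the set `X`. -/
noncomputable def outdegOn (G : V → V → Prop) (v : V) (X : Set V) : ℕ := {u ∈ X | G v u}.ncard

/-- Number of in-neighbours of `v` inside the set `X`. -/
noncomputable def indegOn (G : V → V → Prop) (v : V) (X : Set V) : ℕ := {u ∈ X | G u v}.ncard

/-- Number of arcs with tail in `X` and head in `Y`. -/
noncomputable def arcsBetween (G : V → V → Prop) (X Y : Set V) : ℕ :=
  {p : V × V | p.1 ∈ X ∧ p.2 ∈ Y ∧ G p.1 p.2}.ncard

/-- `G` is an oriented graph: for distinct `x, y` at most one of the arcs `xy`, `yx`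
is present (this also rules out loops). -/
def IsOrientedGraph (G : V → V → Prop) : Prop := ∀ x y, G x y → ¬ G y x

/-- `σ₊₋(G) ≥ r`: for every ordered pair of distinct vertices `x, y` with `xy` not an arc,
`d⁺(x) + d⁻(y) ≥ r`. -/
def SigmaGE (G : V → V → Prop) (r : ℝ) : Prop :=
  ∀ x y : V, x ≠ y → ¬ G x y → r ≤ (outdeg G x : ℝ) + (indeg G y : ℝ)

/-- An antidirected Hamilton cycle in a digraph `G` on `n` vertices: a cyclic ordering
of all vertices such that between consecutive vertices exactly one arc is present
and the directions of these arcs alternate around the cycle. -/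
def HasAntidirectedHamCycle (n : ℕ) (G : V → V → Prop) : Prop :=
  ∃ f : ZMod n ≃ V, ∀ i : ZMod n,
    Xor' (G (f i) (f (i + 1))) (G (f (i + 1)) (f i)) ∧
    (G (f i) (f (i + 1)) ↔ G (f (i + 2)) (f (i + 1)))

/-- A directed Hamilton cycle in a digraph `G` on `n` vertices. -/
def HasDirectedHamCycle (n : ℕ) (G : V → V → Prop) : Prop :=
  ∃ f : ZMod n ≃ V, ∀ i : ZMod n, G (f i) (f (i + 1))

/-- `G` contains every orientation of a Hamilton cycle: for every assignment of a
direction to each edge of the `n`-cycle there is a cyclic ordering of all vertices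
realizing it. -/
def ContainsEveryOrientationHamCycle (n : ℕ) (G : V → V → Prop) : Prop :=
  ∀ σ : ZMod n → Bool, ∃ f : ZMod n ≃ V, ∀ i : ZMod n,
    if σ i = true then G (f i) (f (i + 1)) else G (f (i + 1)) (f i)

/-- `G` (a digraph on `n` vertices) is a robust `(ν,τ)`-outexpander. -/
def RobustOutexpander (n : ℕ) (G : V → V → Prop) (ν τ : ℝ) : Prop :=
  ∀ S : Set V, τ * n < (S.ncard : ℝ) → (S.ncard : ℝ) < (1 - τ) * n →
    (S.ncard : ℝ) + ν * n ≤ (({v : V | ν * n ≤ (indegOn G v S : ℝ)}).ncard : ℝ)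

/-- An `(ε,K)`-nice partition `(A,B,C,D)` of an oriented graph `G` on `n` vertices. -/
def NicePartition (n : ℕ) (G : V → V → Prop) (ε K : ℝ) (A B C D : Set V) : Prop :=
  A ∪ B ∪ C ∪ D = Set.univ ∧
  Disjoint A B ∧ Disjoint A C ∧ Disjoint A D ∧
  Disjoint B C ∧ Disjoint B D ∧ Disjoint C D ∧
  A.ncard ≤ C.ncard ∧
  |((A.ncard : ℝ) + (C.ncard : ℝ)) - n / 2| ≤ K * ε * n ∧
  |(B.ncard : ℝ) - n / 4| ≤ K * ε * n ∧
  |(D.ncard : ℝ) - n / 4| ≤ K * ε * n ∧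
  (arcsBetween G (A ∪ D) (C ∪ D) : ℝ) ≤ ε ^ 2 * n ^ 2

/-- `v` is a `δ`-good vertex for the partition `(A,B,C,D)`. -/
def GoodVertex (n : ℕ) (G : V → V → Prop) (δ : ℝ) (A B C D : Set V) (v : V) : Prop :=
  (v ∈ A → (A.ncard : ℝ) / 2 - δ * n ≤ (outdegOn G v A : ℝ) ∧
           (A.ncard : ℝ) / 2 - δ * n ≤ (indegOn G v A : ℝ) ∧
           (B.ncard : ℝ) - δ * n ≤ (outdegOn G v B : ℝ) ∧
           (D.ncard : ℝ) - δ * n ≤ (indegOn G v D : ℝ)) ∧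
  (v ∈ B → (C.ncard : ℝ) - δ * n ≤ (outdegOn G v C : ℝ) ∧
           (A.ncard : ℝ) - δ * n ≤ (indegOn G v A : ℝ)) ∧
  (v ∈ C → (C.ncard : ℝ) / 2 - δ * n ≤ (outdegOn G v C : ℝ) ∧
           (C.ncard : ℝ) / 2 - δ * n ≤ (indegOn G v C : ℝ) ∧
           (D.ncard : ℝ) - δ * n ≤ (outdegOn G v D : ℝ) ∧
           (B.ncard : ℝ) - δ * n ≤ (indegOn G v B : ℝ)) ∧
  (v ∈ D → (C.ncard : ℝ) / 2 - δ * n ≤ (outdegOn G v B : ℝ) ∧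
           (A.ncard : ℝ) / 2 - δ * n ≤ (indegOn G v B : ℝ) ∧
           (A.ncard : ℝ) - δ * n ≤ (outdegOn G v A : ℝ) ∧
           (C.ncard : ℝ) - δ * n ≤ (indegOn G v C : ℝ))

/-- A special arc for the partition `(A,B,C,D)`: tail in `A ∪ D` and head in `C ∪ D`,
or tail in `B ∪ C` and head in `A ∪ B`. -/
def SpecialArc (G : V → V → Prop) (A B C D : Set V) (u v : V) : Prop :=
  G u v ∧ ((u ∈ A ∪ D ∧ v ∈ C ∪ D) ∨ (u ∈ B ∪ C ∧ v ∈ A ∪ B))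

/-- `p 0, p 1, …, p (d-1)` is an antidirected path in `G`: the vertices are distinct,
between consecutive vertices exactly one arc is present, and consecutive arcs
alternate in direction. -/
def IsAntidirectedPathOn (G : V → V → Prop) (d : ℕ) (p : ℕ → V) : Prop :=
  (∀ i j, i < d → j < d → p i = p j → i = j) ∧
  (∀ i, i + 1 < d → Xor' (G (p i) (p (i + 1))) (G (p (i + 1)) (p i))) ∧
  (∀ i, i + 2 < d → (G (p i) (p (i + 1)) ↔ G (p (i + 2)) (p (i + 1))))

/-- A `D`-proper path for the partition `(A,B,C,D)` and parameter `δ`: an antidirected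
path of order at most 10 whose first and last arcs point away from / towards the
interior as prescribed (`v₁v₂` and `v_{d-1}v_d` are arcs) and whose end-vertices are
`δ`-good vertices of `D`. -/
def IsDProperPath (n : ℕ) (G : V → V → Prop) (δ : ℝ) (A B C D : Set V)
    (d : ℕ) (p : ℕ → V) : Prop :=
  IsAntidirectedPathOn G d p ∧ 2 ≤ d ∧ d ≤ 10 ∧
  G (p 0) (p 1) ∧ G (p (d - 2)) (p (d - 1)) ∧
  p 0 ∈ D ∧ p (d - 1) ∈ D ∧
  GoodVertex n G δ A B C D (p 0) ∧ GoodVertex n G δ A B C D (p (d - 1))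

end Defs

set_option linter.unusedSectionVars false

section AuxLemmas
variable {V : Type*} [Fintype V] {G : V → V → Prop}

lemma ncard_union_le3 (s t u : Set V) :
    (s ∪ t ∪ u).ncard ≤ s.ncard + t.ncard + u.ncard :=
  le_trans (Set.ncard_union_le _ _) (by
    have := Set.ncard_union_le s t; omega)

lemma ncard_union_le4 (s t u v : Set V) :
    (s ∪ t ∪ u ∪ v).ncard ≤ s.ncard + t.ncard + u.ncard + v.ncard :=
  le_trans (Set.ncard_union_le _ _) (by have := ncard_union_le3 s t u; omega)

lemma outdeg_le {x : V} {S : Set V} (h : {u | G x u} ⊆ S) : outdeg G x ≤ S.ncard :=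
  Set.ncard_le_ncard h (Set.toFinite S)

lemma indeg_le {x : V} {S : Set V} (h : {u | G u x} ⊆ S) : indeg G x ≤ S.ncard :=
  Set.ncard_le_ncard h (Set.toFinite S)

lemma outdeg_add_indeg_le (hG : IsOrientedGraph G) (x : V) {S : Set V}
    (h1 : {u | G x u} ⊆ S) (h2 : {u | G u x} ⊆ S) :
    outdeg G x + indeg G x ≤ S.ncard := by
  have hdisj : Disjoint {u | G x u} {u | G u x} := by
    rw [Set.disjoint_left]
    intro u hu1 hu2
    exact hG x u hu1 hu2
  have : outdeg G x + indeg G x = ({u | G x u} ∪ {u | G u x}).ncard :=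
    (Set.ncard_union_eq hdisj (Set.toFinite _) (Set.toFinite _)).symm
  rw [this]
  exact Set.ncard_le_ncard (Set.union_subset h1 h2) (Set.toFinite S)

/-- The mini-lemma: in any oriented graph restricted to a set `S` with at least
two elements, there are `x ≠ y` in `S` with no arc `x → y` whose local out/in degree
sum is at most `|S| - 1`. -/
lemma miniLemma (hG : IsOrientedGraph G) {S : Set V} (hS : 2 ≤ S.ncard) :
    ∃ x ∈ S, ∃ y ∈ S, x ≠ y ∧ ¬ G x y ∧
      {u ∈ S | G x u}.ncard + {u ∈ S | G u y}.ncard + 1 ≤ S.ncard := by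
  classical
  have hSfin : S.Finite := Set.toFinite S
  -- basic: for any y ∈ S, local out + local in ≤ |S| - 1
  have hbound : ∀ y ∈ S, {u ∈ S | G y u}.ncard + {u ∈ S | G u y}.ncard + 1 ≤ S.ncard := by
    intro y hy
    have hdisj : Disjoint {u ∈ S | G y u} {u ∈ S | G u y} := by
      rw [Set.disjoint_left]; rintro u ⟨_, h1⟩ ⟨_, h2⟩; exact hG y u h1 h2
    have hsub : {u ∈ S | G y u} ∪ {u ∈ S | G u y} ⊆ S \ {y} := by
      intro u hu
      have huS : u ∈ S := by rcases hu with ⟨h, _⟩ | ⟨h, _⟩ <;> exact h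
      refine ⟨huS, ?_⟩
      simp only [Set.mem_singleton_iff]
      rintro rfl
      rcases hu with ⟨_, h⟩ | ⟨_, h⟩ <;> exact hG u u h h
    have h1 : {u ∈ S | G y u}.ncard + {u ∈ S | G u y}.ncard ≤ (S \ {y}).ncard := by
      rw [← Set.ncard_union_eq hdisj (Set.toFinite _) (Set.toFinite _)]
      exact Set.ncard_le_ncard hsub hSfin.diff
    have h2 : (S \ {y}).ncard + 1 = S.ncard := Set.ncard_diff_singleton_add_one hy hSfin
    omega
  -- pick x minimizing local outdegree
  have hne : hSfin.toFinset.Nonempty := by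
    rw [Set.Finite.toFinset_nonempty]
    exact Set.nonempty_of_ncard_ne_zero (by omega)
  obtain ⟨x, hxS, hxmin⟩ := Finset.exists_min_image hSfin.toFinset
    (fun v => {u ∈ S | G v u}.ncard) hne
  rw [Set.Finite.mem_toFinset] at hxS
  by_cases hdom : ∃ y ∈ S, y ≠ x ∧ ¬ G x y
  · obtain ⟨y, hyS, hyx, hxy⟩ := hdom
    refine ⟨x, hxS, y, hyS, hyx.symm, hxy, ?_⟩
    have h1 := hxmin y (by rwa [Set.Finite.mem_toFinset])
    have h2 := hbound y hyS
    omega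
  · -- x dominates S
    push_neg at hdom
    have hdomx : ∀ y ∈ S, y ≠ x → G x y := fun y hy hyx => hdom y hy hyx
    -- indeg of x within S is 0
    have hin0 : {u ∈ S | G u x} = ∅ := by
      ext u
      simp only [Set.mem_setOf_eq, Set.mem_empty_iff_false, iff_false, not_and]
      intro huS hux
      have hux' : u ≠ x := by rintro rfl; exact hG u u hux hux
      exact hG x u (hdomx u huS hux') hux
    obtain ⟨p, hpS, q, hqS, hpq⟩ := (Set.one_lt_ncard hSfin).mp (by omega)
    have hyS : ∃ y ∈ S, y ≠ x := by
      by_cases hpx : p = x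
      · exact ⟨q, hqS, by rw [← hpx]; exact hpq.symm⟩
      · exact ⟨p, hpS, hpx⟩
    obtain ⟨y, hyS, hyx⟩ := hyS
    refine ⟨y, hyS, x, hxS, hyx, fun hGyx => hG x y (hdomx y hyS hyx) hGyx, ?_⟩
    rw [hin0]
    simp only [Set.ncard_empty, add_zero]
    have := hbound y hyS
    omega


lemma coverCases {P : V → V → Prop} (hirr : ∀ x, ¬ P x x)
    (hno : ∀ u₁ v₁ u₂ v₂, P u₁ v₁ → P u₂ v₂ → u₁ = u₂ ∨ u₁ = v₂ ∨ v₁ = u₂ ∨ v₁ = v₂) :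
    (∀ p q, ¬ P p q) ∨
    (∃ w, ∀ p q, P p q → p = w ∨ q = w) ∨
    (∃ u v z, P u v ∧ u ≠ v ∧ z ≠ u ∧ z ≠ v ∧
      ∀ α β, P α β → (α = u ∨ α = v ∨ α = z) ∧ (β = u ∨ β = v ∨ β = z)) := by
  classical
  by_cases hex : ∃ p q, P p q
  swap
  · left; push_neg at hex; exact hex
  obtain ⟨u, v, huv⟩ := hex
  by_cases hu : ∀ p q, P p q → p = u ∨ q = u
  · exact Or.inr (Or.inl ⟨u, hu⟩)
  by_cases hv : ∀ p q, P p q → p = v ∨ q = v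
  · exact Or.inr (Or.inl ⟨v, hv⟩)
  push_neg at hu hv
  obtain ⟨p, q, hpq, hpu, hqu⟩ := hu
  obtain ⟨p', q', hp'q', hp'v, hq'v⟩ := hv
  right; right
  have huv' : u ≠ v := fun h => hirr u (h ▸ huv)
  have hpqne : p ≠ q := fun h => hirr p (h ▸ hpq)
  have hp'q'ne : p' ≠ q' := fun h => hirr p' (h ▸ hp'q')
  have h1 := hno u v p q huv hpq
  have hvpq : v = p ∨ v = q := by
    rcases h1 with h | h | h | h
    · exact absurd h.symm hpu
    · exact absurd h.symm hqu
    · exact Or.inl h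
    · exact Or.inr h
  have h2 := hno u v p' q' huv hp'q'
  have hup' : u = p' ∨ u = q' := by
    rcases h2 with h | h | h | h
    · exact Or.inl h
    · exact Or.inr h
    · exact absurd h.symm hp'v
    · exact absurd h.symm hq'v
  have h3 := hno p q p' q' hpq hp'q'
  -- build z with characterisations
  suffices hz : ∃ z, z ≠ u ∧ z ≠ v ∧ (∀ t, t = p ∨ t = q → t = v ∨ t = z) ∧
      (∀ t, t = p' ∨ t = q' → t = u ∨ t = z) by
    obtain ⟨z, hzu, hzv, hc1, hc2⟩ := hz
    refine ⟨u, v, z, huv, huv', hzu, hzv, ?_⟩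
    intro α β hαβ
    have h0 := hno α β u v hαβ huv
    rcases h0 with h | h | h | h
    · refine ⟨Or.inl h, ?_⟩
      have h4 := hno α β p q hαβ hpq
      rcases h4 with h4 | h4 | h4 | h4
      · exact absurd (h4.symm.trans h) hpu
      · exact absurd (h4.symm.trans h) hqu
      · rcases hc1 β (Or.inl h4) with h5 | h5
        · exact Or.inr (Or.inl h5)
        · exact Or.inr (Or.inr h5)
      · rcases hc1 β (Or.inr h4) with h5 | h5
        · exact Or.inr (Or.inl h5)
        · exact Or.inr (Or.inr h5)
    · refine ⟨Or.inr (Or.inl h), ?_⟩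
      have h4 := hno α β p' q' hαβ hp'q'
      rcases h4 with h4 | h4 | h4 | h4
      · exact absurd (h4.symm.trans h) hp'v
      · exact absurd (h4.symm.trans h) hq'v
      · rcases hc2 β (Or.inl h4) with h5 | h5
        · exact Or.inl h5
        · exact Or.inr (Or.inr h5)
      · rcases hc2 β (Or.inr h4) with h5 | h5
        · exact Or.inl h5
        · exact Or.inr (Or.inr h5)
    · refine ⟨?_, Or.inl h⟩
      have h4 := hno p q α β hpq hαβ
      rcases h4 with h4 | h4 | h4 | h4
      · rcases hc1 α (Or.inl h4.symm) with h5 | h5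
        · exact Or.inr (Or.inl h5)
        · exact Or.inr (Or.inr h5)
      · exact absurd (h4.trans h) hpu
      · rcases hc1 α (Or.inr h4.symm) with h5 | h5
        · exact Or.inr (Or.inl h5)
        · exact Or.inr (Or.inr h5)
      · exact absurd (h4.trans h) hqu
    · refine ⟨?_, Or.inr (Or.inl h)⟩
      have h4 := hno p' q' α β hp'q' hαβ
      rcases h4 with h4 | h4 | h4 | h4
      · rcases hc2 α (Or.inl h4.symm) with h5 | h5
        · exact Or.inl h5
        · exact Or.inr (Or.inr h5)
      · exact absurd (h4.trans h) hp'v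
      · rcases hc2 α (Or.inr h4.symm) with h5 | h5
        · exact Or.inl h5
        · exact Or.inr (Or.inr h5)
      · exact absurd (h4.trans h) hq'v
  -- construct z
  rcases hvpq with hvp | hvq
  · -- v = p, take z := q
    have hq3 : q = p' ∨ q = q' := by
      rcases h3 with h | h | h | h
      · exact absurd (hvp.trans h).symm hp'v
      · exact absurd (hvp.trans h).symm hq'v
      · exact Or.inl h
      · exact Or.inr h
    refine ⟨q, hqu, fun h => hpqne (hvp.symm.trans h.symm), ?_, ?_⟩
    · intro t ht
      rcases ht with h | h
      · exact Or.inl (h.trans hvp.symm)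
      · exact Or.inr h
    · intro t ht
      rcases hq3 with hq3 | hq3
      · -- q = p' ; then u = q'
        have huq' : u = q' := by
          rcases hup' with h | h
          · exact absurd (h.trans hq3.symm).symm hqu
          · exact h
        rcases ht with h | h
        · exact Or.inr (h.trans hq3.symm)
        · exact Or.inl (h.trans huq'.symm)
      · -- q = q' ; then u = p'
        have hup : u = p' := by
          rcases hup' with h | h
          · exact h
          · exact absurd (h.trans hq3.symm).symm hqu
        rcases ht with h | h
        · exact Or.inl (h.trans hup.symm)
        · exact Or.inr (h.trans hq3.symm)
  · -- v = q, take z := p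
    have hp3 : p = p' ∨ p = q' := by
      rcases h3 with h | h | h | h
      · exact Or.inl h
      · exact Or.inr h
      · exact absurd (hvq.trans h).symm hp'v
      · exact absurd (hvq.trans h).symm hq'v
    refine ⟨p, hpu, fun h => hpqne (h.trans hvq), ?_, ?_⟩
    · intro t ht
      rcases ht with h | h
      · exact Or.inr h
      · exact Or.inl (h.trans hvq.symm)
    · intro t ht
      rcases hp3 with hp3 | hp3
      · have huq' : u = q' := by
          rcases hup' with h | h
          · exact absurd (h.trans hp3.symm).symm hpu
          · exact h
        rcases ht with h | h
        · exact Or.inr (h.trans hp3.symm)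
        · exact Or.inl (h.trans huq'.symm)
      · have hup : u = p' := by
          rcases hup' with h | h
          · exact h
          · exact absurd (h.trans hp3.symm).symm hpu
        rcases ht with h | h
        · exact Or.inl (h.trans hup.symm)
        · exact Or.inr (h.trans hp3.symm)


lemma ncard_split (X Ws : Set V) : (X \ Ws).ncard + (X ∩ Ws).ncard = X.ncard := by
  rw [← Set.ncard_union_eq Set.disjoint_sdiff_inter (Set.toFinite _) (Set.toFinite _),
    Set.diff_union_inter]

lemma ncard_singdiff_mem {w : V} {S : Set V} (h : w ∈ S) : (({w} : Set V) \ S).ncard = 0 := by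
  rw [Set.diff_eq_empty.mpr (Set.singleton_subset_iff.mpr h), Set.ncard_empty]

lemma ncard_singdiff_not {w : V} {S : Set V} (h : w ∉ S) : (({w} : Set V) \ S).ncard = 1 := by
  have : ({w} : Set V) \ S = {w} := by
    ext x
    simp only [Set.mem_diff, Set.mem_singleton_iff, and_iff_left_iff_imp]
    rintro rfl
    exact h
  rw [this, Set.ncard_singleton]

lemma ncard_intersing_mem {w : V} {S : Set V} (h : w ∈ S) : (S ∩ {w}).ncard = 1 := by
  have : S ∩ {w} = {w} := by
    ext x
    simp only [Set.mem_inter_iff, Set.mem_singleton_iff, and_iff_right_iff_imp]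
    rintro rfl
    exact h
  rw [this, Set.ncard_singleton]

lemma ncard_intersing_not {w : V} {S : Set V} (h : w ∉ S) : (S ∩ {w}).ncard = 0 := by
  have : S ∩ {w} = ∅ := by
    ext x
    simp only [Set.mem_inter_iff, Set.mem_singleton_iff, Set.mem_empty_iff_false, iff_false,
      not_and]
    rintro hx rfl
    exact h hx
  rw [this, Set.ncard_empty]


lemma master {A B C D W W' : Set V}
    (hG : IsOrientedGraph G)
    (hσ : SigmaGE G ((3 * (Fintype.card V : ℝ) + 2) / 4))
    (hcov : A ∪ B ∪ C ∪ D = Set.univ)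
    (dAB : Disjoint A B) (dAC : Disjoint A C) (dAD : Disjoint A D)
    (dBC : Disjoint B C) (dBD : Disjoint B D) (dCD : Disjoint C D)
    (hWW : W' ⊆ W) (hW3 : W.ncard ≤ 3)
    (hb5 : 5 ≤ B.ncard) (hc5 : 5 ≤ C.ncard) (hd5 : 5 ≤ D.ncard)
    (hspec : ∀ p q, SpecialArc G A B C D p q → (p ∈ W ∧ q ∈ W) ∨ p ∈ W' ∨ q ∈ W')
    (hMain : (A ∩ W).ncard + (C ∩ W).ncard + (W' \ (A ∪ B)).ncard + (W' \ (B ∪ C)).ncard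
      + (W' \ (C ∪ D)).ncard + (W' \ (A ∪ D)).ncard + (W' \ (A ∪ C ∪ D)).ncard
      + (W' \ (A ∪ B ∪ C)).ncard ≤ 3)
    (hS1 : (A \ W).ncard = 1 → A.ncard + (W' \ (A ∪ C ∪ D)).ncard + (W' \ (A ∪ B ∪ C)).ncard
      + (W' \ (B ∪ C ∪ D)).ncard + (W' \ (A ∪ B)).ncard + (W' \ (A ∪ D)).ncard ≤ 4)
    (hS0 : (A \ W).ncard = 0 → A.ncard + (W' \ (A ∪ C ∪ D)).ncard + (W' \ (A ∪ B ∪ C)).ncard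
      + (W' \ (B ∪ C ∪ D)).ncard + (W' \ (A ∪ B)).ncard + (W' \ (A ∪ D)).ncard ≤ 2) :
    False := by
  classical
  set n := Fintype.card V with hndef
  -- abbreviations
  set a := A.ncard with ha
  set b := B.ncard with hb
  set c := C.ncard with hc
  set d := D.ncard with hd
  -- partition cardinality
  have hn : a + b + c + d = n := by
    have e1 : (A ∪ B).ncard = a + b := Set.ncard_union_eq dAB (Set.toFinite _) (Set.toFinite _)
    have e2 : (A ∪ B ∪ C).ncard = a + b + c := by
      rw [Set.ncard_union_eq (by
        rw [Set.disjoint_union_left]; exact ⟨dAC, dBC⟩) (Set.toFinite _) (Set.toFinite _), e1]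
    have e3 : (A ∪ B ∪ C ∪ D).ncard = a + b + c + d := by
      rw [Set.ncard_union_eq (by
        rw [Set.disjoint_union_left, Set.disjoint_union_left]
        exact ⟨⟨dAD, dBD⟩, dCD⟩) (Set.toFinite _) (Set.toFinite _), e2]
    rw [hcov] at e3
    rw [← e3, Set.ncard_univ, Nat.card_eq_fintype_card]
  -- not-mem facts
  have memcases : ∀ u : V, u ∈ A ∨ u ∈ B ∨ u ∈ C ∨ u ∈ D := by
    intro u
    have : u ∈ A ∪ B ∪ C ∪ D := by rw [hcov]; exact Set.mem_univ u
    rcases this with ((h | h) | h) | h <;> tauto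
  -- neighbourhood containments
  have houtAD : ∀ x, x ∈ A ∪ D → x ∉ W → ∀ u, G x u → u ∈ A ∪ B ∪ W' := by
    intro x hxAD hxW u hGxu
    rcases memcases u with h | h | h | h
    · exact Or.inl (Or.inl h)
    · exact Or.inl (Or.inr h)
    · rcases hspec x u ⟨hGxu, Or.inl ⟨hxAD, Or.inl h⟩⟩ with ⟨h1, _⟩ | h1 | h1
      · exact absurd h1 hxW
      · exact absurd (hWW h1) hxW
      · exact Or.inr h1
    · rcases hspec x u ⟨hGxu, Or.inl ⟨hxAD, Or.inr h⟩⟩ with ⟨h1, _⟩ | h1 | h1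
      · exact absurd h1 hxW
      · exact absurd (hWW h1) hxW
      · exact Or.inr h1
  have houtBC : ∀ x, x ∈ B ∪ C → x ∉ W → ∀ u, G x u → u ∈ C ∪ D ∪ W' := by
    intro x hxBC hxW u hGxu
    rcases memcases u with h | h | h | h
    · rcases hspec x u ⟨hGxu, Or.inr ⟨hxBC, Or.inl h⟩⟩ with ⟨h1, _⟩ | h1 | h1
      · exact absurd h1 hxW
      · exact absurd (hWW h1) hxW
      · exact Or.inr h1
    · rcases hspec x u ⟨hGxu, Or.inr ⟨hxBC, Or.inr h⟩⟩ with ⟨h1, _⟩ | h1 | h1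
      · exact absurd h1 hxW
      · exact absurd (hWW h1) hxW
      · exact Or.inr h1
    · exact Or.inl (Or.inl h)
    · exact Or.inl (Or.inr h)
  have hinAB : ∀ x, x ∈ A ∪ B → x ∉ W → ∀ u, G u x → u ∈ A ∪ D ∪ W' := by
    intro x hxAB hxW u hGux
    rcases memcases u with h | h | h | h
    · exact Or.inl (Or.inl h)
    · rcases hspec u x ⟨hGux, Or.inr ⟨Or.inl h, hxAB⟩⟩ with ⟨_, h1⟩ | h1 | h1
      · exact absurd h1 hxW
      · exact Or.inr h1
      · exact absurd (hWW h1) hxW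
    · rcases hspec u x ⟨hGux, Or.inr ⟨Or.inr h, hxAB⟩⟩ with ⟨_, h1⟩ | h1 | h1
      · exact absurd h1 hxW
      · exact Or.inr h1
      · exact absurd (hWW h1) hxW
    · exact Or.inl (Or.inr h)
  have hinCD : ∀ x, x ∈ C ∪ D → x ∉ W → ∀ u, G u x → u ∈ B ∪ C ∪ W' := by
    intro x hxCD hxW u hGux
    rcases memcases u with h | h | h | h
    · rcases hspec u x ⟨hGux, Or.inl ⟨Or.inl h, hxCD⟩⟩ with ⟨_, h1⟩ | h1 | h1
      · exact absurd h1 hxW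
      · exact Or.inr h1
      · exact absurd (hWW h1) hxW
    · exact Or.inl (Or.inl h)
    · exact Or.inl (Or.inr h)
    · rcases hspec u x ⟨hGux, Or.inl ⟨Or.inr h, hxCD⟩⟩ with ⟨_, h1⟩ | h1 | h1
      · exact absurd h1 hxW
      · exact Or.inr h1
      · exact absurd (hWW h1) hxW

  -- sizes after removing W
  have hsplit : ∀ X : Set V, (X \ W).ncard + (X ∩ W).ncard = X.ncard := by
    intro X
    rw [← Set.ncard_union_eq Set.disjoint_sdiff_inter (Set.toFinite _) (Set.toFinite _),
      Set.diff_union_inter]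
  have hrem : ∀ X : Set V, (X ∩ W).ncard ≤ 3 :=
    fun X => le_trans (Set.ncard_le_ncard Set.inter_subset_right (Set.toFinite _)) hW3
  have hB2 : 2 ≤ (B \ W).ncard := by have := hsplit B; have := hrem B; omega
  have hC2 : 2 ≤ (C \ W).ncard := by have := hsplit C; have := hrem C; omega
  have hD2 : 2 ≤ (D \ W).ncard := by have := hsplit D; have := hrem D; omega
  -- q/p abbreviations
  set qD := (W' \ (A ∪ B ∪ C)).ncard with hqD
  set qB := (W' \ (A ∪ C ∪ D)).ncard with hqB
  set qC := (W' \ (B ∪ C ∪ D)).ncard with hqC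
  set p1 := (W' \ (A ∪ B)).ncard with hp1
  set p2 := (W' \ (B ∪ C)).ncard with hp2
  set p3 := (W' \ (C ∪ D)).ncard with hp3
  set p4 := (W' \ (A ∪ D)).ncard with hp4
  set rA := (A ∩ W).ncard with hrA
  set rC := (C ∩ W).ncard with hrC
  -- total degree bound for vertices of D \ W
  have hdegD : ∀ x ∈ D \ W, outdeg G x + indeg G x ≤ a + b + c + qD := by
    rintro x ⟨hxD, hxW⟩
    have h := outdeg_add_indeg_le (S := A ∪ B ∪ C ∪ (W' \ (A ∪ B ∪ C))) hG x ?_ ?_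
    · exact le_trans h (by
        have := ncard_union_le4 A B C (W' \ (A ∪ B ∪ C))
        simp only [← ha, ← hb, ← hc, ← hqD] at this ⊢
        omega)
    · intro u hu
      rcases houtAD x (Or.inr hxD) hxW u hu with (h1 | h1) | h1
      · exact Or.inl (Or.inl (Or.inl h1))
      · exact Or.inl (Or.inl (Or.inr h1))
      · by_cases h2 : u ∈ A ∪ B ∪ C
        · exact Or.inl h2
        · exact Or.inr ⟨h1, h2⟩
    · intro u hu
      rcases hinCD x (Or.inr hxD) hxW u hu with (h1 | h1) | h1
      · exact Or.inl (Or.inl (Or.inr h1))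
      · exact Or.inl (Or.inr h1)
      · by_cases h2 : u ∈ A ∪ B ∪ C
        · exact Or.inl h2
        · exact Or.inr ⟨h1, h2⟩
  have hdegB : ∀ x ∈ B \ W, outdeg G x + indeg G x ≤ a + c + d + qB := by
    rintro x ⟨hxB, hxW⟩
    have h := outdeg_add_indeg_le (S := A ∪ C ∪ D ∪ (W' \ (A ∪ C ∪ D))) hG x ?_ ?_
    · exact le_trans h (by
        have := ncard_union_le4 A C D (W' \ (A ∪ C ∪ D))
        simp only [← ha, ← hc, ← hd, ← hqB] at this ⊢
        omega)
    · intro u hu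
      rcases houtBC x (Or.inl hxB) hxW u hu with (h1 | h1) | h1
      · exact Or.inl (Or.inl (Or.inr h1))
      · exact Or.inl (Or.inr h1)
      · by_cases h2 : u ∈ A ∪ C ∪ D
        · exact Or.inl h2
        · exact Or.inr ⟨h1, h2⟩
    · intro u hu
      rcases hinAB x (Or.inr hxB) hxW u hu with (h1 | h1) | h1
      · exact Or.inl (Or.inl (Or.inl h1))
      · exact Or.inl (Or.inr h1)
      · by_cases h2 : u ∈ A ∪ C ∪ D
        · exact Or.inl h2
        · exact Or.inr ⟨h1, h2⟩
  -- no arcs inside D \ W, B \ W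
  have hnoD : ∀ x ∈ D \ W, ∀ y ∈ D \ W, ¬ G x y := by
    rintro x ⟨hxD, hxW⟩ y ⟨hyD, hyW⟩ hGxy
    rcases houtAD x (Or.inr hxD) hxW y hGxy with (h1 | h1) | h1
    · exact (Set.disjoint_left.mp dAD h1) hyD
    · exact (Set.disjoint_left.mp dBD h1) hyD
    · exact hyW (hWW h1)
  have hnoB : ∀ x ∈ B \ W, ∀ y ∈ B \ W, ¬ G x y := by
    rintro x ⟨hxB, hxW⟩ y ⟨hyB, hyW⟩ hGxy
    rcases houtBC x (Or.inl hxB) hxW y hGxy with (h1 | h1) | h1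
    · exact (Set.disjoint_left.mp dBC hyB) h1
    · exact (Set.disjoint_left.mp dBD hyB) h1
    · exact hyW (hWW h1)
  -- the two global inequalities  s ≤ n - d + qD  and  s ≤ n - b + qB  (in ℝ)
  have hsD : (3 * (n : ℝ) + 2) / 4 ≤ ((a + b + c + qD : ℕ) : ℝ) := by
    obtain ⟨x, hx, y, hy, hxy⟩ := (Set.one_lt_ncard (Set.toFinite _)).mp (by omega : 1 < (D \ W).ncard)
    have h1 := hσ x y hxy (hnoD x hx y hy)
    have h2 := hσ y x hxy.symm (hnoD y hy x hx)
    have h3 := hdegD x hx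
    have h4 := hdegD y hy
    have h3R := (Nat.cast_le (α := ℝ)).mpr h3
    have h4R := (Nat.cast_le (α := ℝ)).mpr h4
    push_cast at h3R h4R ⊢
    linarith
  have hsB : (3 * (n : ℝ) + 2) / 4 ≤ ((a + c + d + qB : ℕ) : ℝ) := by
    obtain ⟨x, hx, y, hy, hxy⟩ := (Set.one_lt_ncard (Set.toFinite _)).mp (by omega : 1 < (B \ W).ncard)
    have h1 := hσ x y hxy (hnoB x hx y hy)
    have h2 := hσ y x hxy.symm (hnoB y hy x hx)
    have h3 := hdegB x hx
    have h4 := hdegB y hy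
    have h3R := (Nat.cast_le (α := ℝ)).mpr h3
    have h4R := (Nat.cast_le (α := ℝ)).mpr h4
    push_cast at h3R h4R ⊢
    linarith
  -- helper: a vertex of C \ W with its total degree bound
  obtain ⟨yC, hyC⟩ : ∃ yC, yC ∈ C \ W := by
    obtain ⟨x, hx, -⟩ := (Set.one_lt_ncard (Set.toFinite _)).mp (by omega : 1 < (C \ W).ncard)
    exact ⟨x, hx⟩
  have hyCC : yC ∈ C := hyC.1
  have hyCW : yC ∉ W := hyC.2
  have hcC : (C \ {yC}).ncard + 1 = c := Set.ncard_diff_singleton_add_one hyCC (Set.toFinite _)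
  have hdegC : outdeg G yC + indeg G yC ≤ (C \ {yC}).ncard + b + d + qC := by
    have h := outdeg_add_indeg_le (S := (C \ {yC}) ∪ B ∪ D ∪ (W' \ (B ∪ C ∪ D))) hG yC ?_ ?_
    · exact le_trans h (by
        have := ncard_union_le4 (C \ {yC}) B D (W' \ (B ∪ C ∪ D))
        simp only [← hb, ← hd, ← hqC] at this ⊢
        omega)
    · intro u hu
      have hu' : u ≠ yC := by rintro rfl; exact hG u u hu hu
      rcases memcases u with h1 | h1 | h1 | h1
      · -- u ∈ A : impossible unless in W'
        rcases houtBC yC (Or.inr hyCC) hyCW u hu with (h2 | h2) | h2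
        · exact absurd h2 ((Set.disjoint_left.mp dAC) h1)
        · exact absurd h2 ((Set.disjoint_left.mp dAD) h1)
        · by_cases h3 : u ∈ B ∪ C ∪ D
          · rcases h3 with (h3 | h3) | h3
            · exact Or.inl (Or.inl (Or.inr h3))
            · exact Or.inl (Or.inl (Or.inl ⟨h3, hu'⟩))
            · exact Or.inl (Or.inr h3)
          · exact Or.inr ⟨h2, h3⟩
      · exact Or.inl (Or.inl (Or.inr h1))
      · exact Or.inl (Or.inl (Or.inl ⟨h1, hu'⟩))
      · exact Or.inl (Or.inr h1)
    · intro u hu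
      have hu' : u ≠ yC := by rintro rfl; exact hG u u hu hu
      rcases memcases u with h1 | h1 | h1 | h1
      · rcases hinCD yC (Or.inl hyCC) hyCW u hu with (h2 | h2) | h2
        · exact absurd h2 ((Set.disjoint_left.mp dAB) h1)
        · exact absurd h2 ((Set.disjoint_left.mp dAC) h1)
        · by_cases h3 : u ∈ B ∪ C ∪ D
          · rcases h3 with (h3 | h3) | h3
            · exact Or.inl (Or.inl (Or.inr h3))
            · exact Or.inl (Or.inl (Or.inl ⟨h3, hu'⟩))
            · exact Or.inl (Or.inr h3)
          · exact Or.inr ⟨h2, h3⟩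
      · exact Or.inl (Or.inl (Or.inr h1))
      · exact Or.inl (Or.inl (Or.inl ⟨h1, hu'⟩))
      · exact Or.inl (Or.inr h1)
  -- case split on (A \ W).ncard
  rcases Nat.lt_or_ge (A \ W).ncard 2 with hA01 | hA2
  · -- small cases
    interval_cases hA0 : (A \ W).ncard
    · -- A \ W = ∅
      have hAsub : a = rA := by have := hsplit A; rw [hA0] at this; omega
      obtain ⟨xD, hxD⟩ : ∃ x, x ∈ D \ W := by
        obtain ⟨x, hx, -⟩ := (Set.one_lt_ncard (Set.toFinite _)).mp (by omega : 1 < (D \ W).ncard)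
        exact ⟨x, hx⟩
      obtain ⟨xB, hxB⟩ : ∃ x, x ∈ B \ W := by
        obtain ⟨x, hx, -⟩ := (Set.one_lt_ncard (Set.toFinite _)).mp (by omega : 1 < (B \ W).ncard)
        exact ⟨x, hx⟩
      -- σ pairs
      have hne1 : xD ≠ yC := by
        rintro rfl; exact (Set.disjoint_left.mp dCD hyCC) hxD.1
      have hno1 : ¬ G xD yC := by
        intro h
        rcases houtAD xD (Or.inr hxD.1) hxD.2 yC h with (h1 | h1) | h1
        · exact (Set.disjoint_left.mp dAC h1) hyCC
        · exact (Set.disjoint_left.mp dBC h1) hyCC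
        · exact hyCW (hWW h1)
      have hne2 : yC ≠ xB := by
        rintro rfl; exact (Set.disjoint_left.mp dBC hxB.1) hyCC
      have hno2 : ¬ G yC xB := by
        intro h
        rcases houtBC yC (Or.inr hyCC) hyCW xB h with (h1 | h1) | h1
        · exact (Set.disjoint_left.mp dBC hxB.1) h1
        · exact (Set.disjoint_left.mp dBD hxB.1) h1
        · exact hxB.2 (hWW h1)
      have hσ1 := hσ xD yC hne1 hno1
      have hσ2 := hσ yC xB hne2 hno2
      -- degree bounds
      have hout : outdeg G xD ≤ a + b + p1 := by
        refine le_trans (outdeg_le (S := A ∪ B ∪ (W' \ (A ∪ B))) ?_) ?_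
        · intro u hu
          rcases houtAD xD (Or.inr hxD.1) hxD.2 u hu with (h1 | h1) | h1
          · exact Or.inl (Or.inl h1)
          · exact Or.inl (Or.inr h1)
          · by_cases h2 : u ∈ A ∪ B
            · exact Or.inl h2
            · exact Or.inr ⟨h1, h2⟩
        · have := ncard_union_le3 A B (W' \ (A ∪ B))
          simp only [← ha, ← hb, ← hp1] at this ⊢
          omega
      have hin : indeg G xB ≤ a + d + p4 := by
        refine le_trans (indeg_le (S := A ∪ D ∪ (W' \ (A ∪ D))) ?_) ?_
        · intro u hu
          rcases hinAB xB (Or.inr hxB.1) hxB.2 u hu with (h1 | h1) | h1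
          · exact Or.inl (Or.inl h1)
          · exact Or.inl (Or.inr h1)
          · by_cases h2 : u ∈ A ∪ D
            · exact Or.inl h2
            · exact Or.inr ⟨h1, h2⟩
        · have := ncard_union_le3 A D (W' \ (A ∪ D))
          simp only [← ha, ← hd, ← hp4] at this ⊢
          omega
      have hnum := hS0 rfl
      -- assemble
      have houtR := (Nat.cast_le (α := ℝ)).mpr hout
      have hinR := (Nat.cast_le (α := ℝ)).mpr hin
      have hdegCR := (Nat.cast_le (α := ℝ)).mpr hdegC
      have hnumR := (Nat.cast_le (α := ℝ)).mpr hnum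
      have hnR := congrArg (Nat.cast (R := ℝ)) hn
      have hcCR := congrArg (Nat.cast (R := ℝ)) hcC
      push_cast at houtR hinR hdegCR hnumR hnR hcCR
      push_cast at hsD hsB
      linarith
    · -- (A \ W).ncard = 1
      obtain ⟨xA, hxA⟩ := Set.ncard_eq_one.mp hA0
      have hxAmem : xA ∈ A \ W := by rw [hxA]; exact Set.mem_singleton xA
      have hxAA : xA ∈ A := hxAmem.1
      have hxAW : xA ∉ W := hxAmem.2
      have haA : (A \ {xA}).ncard + 1 = a := Set.ncard_diff_singleton_add_one hxAA (Set.toFinite _)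
      have hne1 : xA ≠ yC := by
        rintro rfl; exact (Set.disjoint_left.mp dAC hxAA) hyCC
      have hno1 : ¬ G xA yC := by
        intro h
        rcases houtAD xA (Or.inl hxAA) hxAW yC h with (h1 | h1) | h1
        · exact (Set.disjoint_left.mp dAC h1) hyCC
        · exact (Set.disjoint_left.mp dBC h1) hyCC
        · exact hyCW (hWW h1)
      have hno2 : ¬ G yC xA := by
        intro h
        rcases houtBC yC (Or.inr hyCC) hyCW xA h with (h1 | h1) | h1
        · exact (Set.disjoint_left.mp dAC hxAA) h1
        · exact (Set.disjoint_left.mp dAD hxAA) h1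
        · exact hxAW (hWW h1)
      have hσ1 := hσ xA yC hne1 hno1
      have hσ2 := hσ yC xA hne1.symm hno2
      have hout : outdeg G xA ≤ (A \ {xA}).ncard + b + p1 := by
        refine le_trans (outdeg_le (S := (A \ {xA}) ∪ B ∪ (W' \ (A ∪ B))) ?_) ?_
        · intro u hu
          have hu' : u ≠ xA := by rintro rfl; exact hG u u hu hu
          rcases houtAD xA (Or.inl hxAA) hxAW u hu with (h1 | h1) | h1
          · exact Or.inl (Or.inl ⟨h1, hu'⟩)
          · exact Or.inl (Or.inr h1)
          · by_cases h2 : u ∈ A ∪ B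
            · rcases h2 with h2 | h2
              · exact Or.inl (Or.inl ⟨h2, hu'⟩)
              · exact Or.inl (Or.inr h2)
            · exact Or.inr ⟨h1, h2⟩
        · have := ncard_union_le3 (A \ {xA}) B (W' \ (A ∪ B))
          simp only [← hb, ← hp1] at this ⊢
          omega
      have hin : indeg G xA ≤ (A \ {xA}).ncard + d + p4 := by
        refine le_trans (indeg_le (S := (A \ {xA}) ∪ D ∪ (W' \ (A ∪ D))) ?_) ?_
        · intro u hu
          have hu' : u ≠ xA := by rintro rfl; exact hG u u hu hu
          rcases hinAB xA (Or.inl hxAA) hxAW u hu with (h1 | h1) | h1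
          · exact Or.inl (Or.inl ⟨h1, hu'⟩)
          · exact Or.inl (Or.inr h1)
          · by_cases h2 : u ∈ A ∪ D
            · rcases h2 with h2 | h2
              · exact Or.inl (Or.inl ⟨h2, hu'⟩)
              · exact Or.inl (Or.inr h2)
            · exact Or.inr ⟨h1, h2⟩
        · have := ncard_union_le3 (A \ {xA}) D (W' \ (A ∪ D))
          simp only [← hd, ← hp4] at this ⊢
          omega
      have hnum := hS1 rfl
      have houtR := (Nat.cast_le (α := ℝ)).mpr hout
      have hinR := (Nat.cast_le (α := ℝ)).mpr hin
      have hdegCR := (Nat.cast_le (α := ℝ)).mpr hdegC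
      have hnumR := (Nat.cast_le (α := ℝ)).mpr hnum
      have hnR := congrArg (Nat.cast (R := ℝ)) hn
      have hcCR := congrArg (Nat.cast (R := ℝ)) hcC
      have haAR := congrArg (Nat.cast (R := ℝ)) haA
      push_cast at houtR hinR hdegCR hnumR hnR hcCR haAR
      push_cast at hsD hsB
      linarith
  · -- main case : mini-lemma in A \ W and C \ W
    obtain ⟨x1, hx1, y1, hy1, hxy1, hno1, hloc1⟩ := miniLemma hG hA2
    obtain ⟨x2, hx2, y2, hy2, hxy2, hno2, hloc2⟩ := miniLemma hG hC2
    have hσ1 := hσ x1 y1 hxy1 hno1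
    have hσ2 := hσ x2 y2 hxy2 hno2
    -- degree bounds for the A-pair
    have hout1 : outdeg G x1 ≤ {u ∈ A \ W | G x1 u}.ncard + rA + b + p1 := by
      refine le_trans (outdeg_le
        (S := {u ∈ A \ W | G x1 u} ∪ (A ∩ W) ∪ B ∪ (W' \ (A ∪ B))) ?_) ?_
      · intro u hu
        rcases houtAD x1 (Or.inl hx1.1) hx1.2 u hu with (h1 | h1) | h1
        · by_cases h2 : u ∈ W
          · exact Or.inl (Or.inl (Or.inr ⟨h1, h2⟩))
          · exact Or.inl (Or.inl (Or.inl ⟨⟨h1, h2⟩, hu⟩))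
        · exact Or.inl (Or.inr h1)
        · by_cases h2 : u ∈ A ∪ B
          · rcases h2 with h2 | h2
            · exact Or.inl (Or.inl (Or.inr ⟨h2, hWW h1⟩))
            · exact Or.inl (Or.inr h2)
          · exact Or.inr ⟨h1, h2⟩
      · have := ncard_union_le4 {u ∈ A \ W | G x1 u} (A ∩ W) B (W' \ (A ∪ B))
        simp only [← hb, ← hp1, ← hrA] at this ⊢
        omega
    have hin1 : indeg G y1 ≤ {u ∈ A \ W | G u y1}.ncard + rA + d + p4 := by
      refine le_trans (indeg_le
        (S := {u ∈ A \ W | G u y1} ∪ (A ∩ W) ∪ D ∪ (W' \ (A ∪ D))) ?_) ?_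
      · intro u hu
        rcases hinAB y1 (Or.inl hy1.1) hy1.2 u hu with (h1 | h1) | h1
        · by_cases h2 : u ∈ W
          · exact Or.inl (Or.inl (Or.inr ⟨h1, h2⟩))
          · exact Or.inl (Or.inl (Or.inl ⟨⟨h1, h2⟩, hu⟩))
        · exact Or.inl (Or.inr h1)
        · by_cases h2 : u ∈ A ∪ D
          · rcases h2 with h2 | h2
            · exact Or.inl (Or.inl (Or.inr ⟨h2, hWW h1⟩))
            · exact Or.inl (Or.inr h2)
          · exact Or.inr ⟨h1, h2⟩
      · have := ncard_union_le4 {u ∈ A \ W | G u y1} (A ∩ W) D (W' \ (A ∪ D))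
        simp only [← hd, ← hp4, ← hrA] at this ⊢
        omega
    -- degree bounds for the C-pair
    have hout2 : outdeg G x2 ≤ {u ∈ C \ W | G x2 u}.ncard + rC + d + p3 := by
      refine le_trans (outdeg_le
        (S := {u ∈ C \ W | G x2 u} ∪ (C ∩ W) ∪ D ∪ (W' \ (C ∪ D))) ?_) ?_
      · intro u hu
        rcases houtBC x2 (Or.inr hx2.1) hx2.2 u hu with (h1 | h1) | h1
        · by_cases h2 : u ∈ W
          · exact Or.inl (Or.inl (Or.inr ⟨h1, h2⟩))
          · exact Or.inl (Or.inl (Or.inl ⟨⟨h1, h2⟩, hu⟩))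
        · exact Or.inl (Or.inr h1)
        · by_cases h2 : u ∈ C ∪ D
          · rcases h2 with h2 | h2
            · exact Or.inl (Or.inl (Or.inr ⟨h2, hWW h1⟩))
            · exact Or.inl (Or.inr h2)
          · exact Or.inr ⟨h1, h2⟩
      · have := ncard_union_le4 {u ∈ C \ W | G x2 u} (C ∩ W) D (W' \ (C ∪ D))
        simp only [← hd, ← hp3, ← hrC] at this ⊢
        omega
    have hin2 : indeg G y2 ≤ {u ∈ C \ W | G u y2}.ncard + rC + b + p2 := by
      refine le_trans (indeg_le
        (S := {u ∈ C \ W | G u y2} ∪ (C ∩ W) ∪ B ∪ (W' \ (B ∪ C))) ?_) ?_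
      · intro u hu
        rcases hinCD y2 (Or.inl hy2.1) hy2.2 u hu with (h1 | h1) | h1
        · exact Or.inl (Or.inr h1)
        · by_cases h2 : u ∈ W
          · exact Or.inl (Or.inl (Or.inr ⟨h1, h2⟩))
          · exact Or.inl (Or.inl (Or.inl ⟨⟨h1, h2⟩, hu⟩))
        · by_cases h2 : u ∈ B ∪ C
          · rcases h2 with h2 | h2
            · exact Or.inl (Or.inr h2)
            · exact Or.inl (Or.inl (Or.inr ⟨h2, hWW h1⟩))
          · exact Or.inr ⟨h1, h2⟩
      · have := ncard_union_le4 {u ∈ C \ W | G u y2} (C ∩ W) B (W' \ (B ∪ C))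
        simp only [← hb, ← hp2, ← hrC] at this ⊢
        omega
    have hsplitA := hsplit A
    have hsplitC := hsplit C
    rw [← hrA, ← ha] at hsplitA
    rw [← hrC, ← hc] at hsplitC
    have hout1R := (Nat.cast_le (α := ℝ)).mpr hout1
    have hin1R := (Nat.cast_le (α := ℝ)).mpr hin1
    have hout2R := (Nat.cast_le (α := ℝ)).mpr hout2
    have hin2R := (Nat.cast_le (α := ℝ)).mpr hin2
    have hloc1R := (Nat.cast_le (α := ℝ)).mpr hloc1
    have hloc2R := (Nat.cast_le (α := ℝ)).mpr hloc2
    have hMainR := (Nat.cast_le (α := ℝ)).mpr hMain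
    have hsplitAR := congrArg (Nat.cast (R := ℝ)) hsplitA
    have hsplitCR := congrArg (Nat.cast (R := ℝ)) hsplitC
    have hnR := congrArg (Nat.cast (R := ℝ)) hn
    push_cast at hout1R hin1R hout2R hin2R hloc1R hloc2R hMainR hsplitAR hsplitCR hnR
    push_cast at hsD hsB
    linarith




end AuxLemmas

/-- For every `K > 0` there exists `δ₀ > 0` such that for every `δ ∈ (0, δ₀]`
there exists an integer `n₀` such that: if `G` is an oriented graph on `n ≥ n₀` vertices
with `σ₊₋(G) ≥ (3n+2)/4` and `(A,B,C,D)` is a `(δ,K)`-nice partition of `G`, then `G`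
contains two special arcs for `(A,B,C,D)` that share no endpoint. -/
theorem stmt9 (K : ℝ) (hK : 0 < K) :
    ∃ δ₀ : ℝ, 0 < δ₀ ∧ ∀ δ : ℝ, 0 < δ → δ ≤ δ₀ →
    ∃ n₀ : ℕ, ∀ (n : ℕ) (V : Type) [Fintype V] (G : V → V → Prop),
      n₀ ≤ n → Fintype.card V = n → IsOrientedGraph G →
      SigmaGE G ((3 * n + 2) / 4) →
      ∀ A B C D : Set V, NicePartition n G δ K A B C D →
      ∃ u₁ v₁ u₂ v₂ : V,
        SpecialArc G A B C D u₁ v₁ ∧ SpecialArc G A B C D u₂ v₂ ∧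
        u₁ ≠ u₂ ∧ u₁ ≠ v₂ ∧ v₁ ≠ u₂ ∧ v₁ ≠ v₂ := by
  classical
  refine ⟨1 / (1000 * K), by positivity, ?_⟩
  intro δ hδ0 hδle
  refine ⟨1000, ?_⟩
  intro n V _ G hn0 hcard hor hσ A B C D hnice
  obtain ⟨hcov, dAB, dAC, dAD, dBC, dBD, dCD, hACle, habsAC, habsB, habsD, -⟩ := hnice
  by_contra hcon
  have hno : ∀ u₁ v₁ u₂ v₂, SpecialArc G A B C D u₁ v₁ → SpecialArc G A B C D u₂ v₂ →
      u₁ = u₂ ∨ u₁ = v₂ ∨ v₁ = u₂ ∨ v₁ = v₂ := by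
    intro u₁ v₁ u₂ v₂ h1 h2
    by_contra hc
    push_neg at hc
    exact hcon ⟨u₁, v₁, u₂, v₂, h1, h2, hc.1, hc.2.1, hc.2.2.1, hc.2.2.2⟩
  have hirr : ∀ x, ¬ SpecialArc G A B C D x x := fun x h => hor x x h.1 h.1
  -- numeric size facts
  have hn1000 : (1000 : ℝ) ≤ (n : ℝ) := by exact_mod_cast hn0
  have hKδn : K * δ * n ≤ (n : ℝ) / 1000 := by
    have h2 := (le_div_iff₀ (by positivity : (0:ℝ) < 1000 * K)).mp hδle
    have h3 := mul_le_mul_of_nonneg_right h2 (show (0:ℝ) ≤ (n : ℝ) / 1000 by positivity)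
    calc K * δ * n = δ * (1000 * K) * ((n : ℝ) / 1000) := by ring
      _ ≤ 1 * ((n : ℝ) / 1000) := h3
      _ = (n : ℝ) / 1000 := by ring
  have hb5 : 5 ≤ B.ncard := by
    have h1 := (abs_le.mp habsB).1
    have : (5 : ℝ) ≤ B.ncard := by linarith
    exact_mod_cast this
  have hd5 : 5 ≤ D.ncard := by
    have h1 := (abs_le.mp habsD).1
    have : (5 : ℝ) ≤ D.ncard := by linarith
    exact_mod_cast this
  have hc5 : 5 ≤ C.ncard := by
    have h1 := (abs_le.mp habsAC).1
    have h2 : (A.ncard : ℝ) ≤ C.ncard := by exact_mod_cast hACle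
    have : (5 : ℝ) ≤ C.ncard := by linarith
    exact_mod_cast this
  have hσ' : SigmaGE G ((3 * (Fintype.card V : ℝ) + 2) / 4) := by rw [hcard]; exact hσ
  -- membership of any vertex
  have memcases : ∀ u : V, u ∈ A ∨ u ∈ B ∨ u ∈ C ∨ u ∈ D := by
    intro u
    have : u ∈ A ∪ B ∪ C ∪ D := by rw [hcov]; exact Set.mem_univ u
    rcases this with ((h | h) | h) | h <;> tauto
  have hstar : (∃ w, ∀ p q, SpecialArc G A B C D p q → p = w ∨ q = w) ∨
      (∃ u v z, SpecialArc G A B C D u v ∧ u ≠ v ∧ z ≠ u ∧ z ≠ v ∧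
        ∀ α β, SpecialArc G A B C D α β →
          (α = u ∨ α = v ∨ α = z) ∧ (β = u ∨ β = v ∨ β = z)) := by
    rcases coverCases hirr hno with h | h | h
    · have hNE : Nonempty V := by
        have : 0 < Fintype.card V := by omega
        exact Fintype.card_pos_iff.mp this
      exact Or.inl ⟨Classical.arbitrary V, fun p q hpq => absurd hpq (h p q)⟩
    · exact Or.inl h
    · exact Or.inr h
  rcases hstar with ⟨w, hw⟩ | ⟨u, v, z, hsp, huv, hzu, hzv, hT⟩
  · -- star case
    have hspec : ∀ p q, SpecialArc G A B C D p q →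
        (p ∈ ({w} : Set V) ∧ q ∈ ({w} : Set V)) ∨ p ∈ ({w} : Set V) ∨ q ∈ ({w} : Set V) := by
      intro p q h
      rcases hw p q h with h1 | h1
      · exact Or.inr (Or.inl (by simp [h1]))
      · exact Or.inr (Or.inr (by simp [h1]))
    have hW3 : ({w} : Set V).ncard ≤ 3 := by rw [Set.ncard_singleton]; omega
    have hsplitA := ncard_split A ({w} : Set V)
    rcases memcases w with hwX | hwX | hwX | hwX
    · have nB : w ∉ B := Set.disjoint_left.mp dAB hwX
      have nC : w ∉ C := Set.disjoint_left.mp dAC hwX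
      have nD : w ∉ D := Set.disjoint_left.mp dAD hwX
      refine master hor hσ' hcov dAB dAC dAD dBC dBD dCD subset_rfl hW3 hb5 hc5 hd5 hspec ?_ ?_ ?_
      · rw [ncard_intersing_mem hwX, ncard_intersing_not nC,
          ncard_singdiff_mem (show w ∈ A ∪ B from Or.inl hwX),
          ncard_singdiff_not (show w ∉ B ∪ C by simp [Set.mem_union, nB, nC]),
          ncard_singdiff_not (show w ∉ C ∪ D by simp [Set.mem_union, nC, nD]),
          ncard_singdiff_mem (show w ∈ A ∪ D from Or.inl hwX),
          ncard_singdiff_mem (show w ∈ A ∪ C ∪ D from Or.inl (Or.inl hwX)),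
          ncard_singdiff_mem (show w ∈ A ∪ B ∪ C from Or.inl (Or.inl hwX))]
      · intro h1
        rw [ncard_intersing_mem hwX] at hsplitA
        rw [ncard_singdiff_mem (show w ∈ A ∪ C ∪ D from Or.inl (Or.inl hwX)),
          ncard_singdiff_mem (show w ∈ A ∪ B ∪ C from Or.inl (Or.inl hwX)),
          ncard_singdiff_not (show w ∉ B ∪ C ∪ D by simp [Set.mem_union, nB, nC, nD]),
          ncard_singdiff_mem (show w ∈ A ∪ B from Or.inl hwX),
          ncard_singdiff_mem (show w ∈ A ∪ D from Or.inl hwX)]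
        omega
      · intro h1
        rw [ncard_intersing_mem hwX] at hsplitA
        rw [ncard_singdiff_mem (show w ∈ A ∪ C ∪ D from Or.inl (Or.inl hwX)),
          ncard_singdiff_mem (show w ∈ A ∪ B ∪ C from Or.inl (Or.inl hwX)),
          ncard_singdiff_not (show w ∉ B ∪ C ∪ D by simp [Set.mem_union, nB, nC, nD]),
          ncard_singdiff_mem (show w ∈ A ∪ B from Or.inl hwX),
          ncard_singdiff_mem (show w ∈ A ∪ D from Or.inl hwX)]
        omega
    · have nA : w ∉ A := Set.disjoint_left.mp dAB.symm hwX
      have nC : w ∉ C := Set.disjoint_left.mp dBC hwX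
      have nD : w ∉ D := Set.disjoint_left.mp dBD hwX
      refine master hor hσ' hcov dAB dAC dAD dBC dBD dCD subset_rfl hW3 hb5 hc5 hd5 hspec ?_ ?_ ?_
      · rw [ncard_intersing_not nA, ncard_intersing_not nC,
          ncard_singdiff_mem (show w ∈ A ∪ B from Or.inr hwX),
          ncard_singdiff_mem (show w ∈ B ∪ C from Or.inl hwX),
          ncard_singdiff_not (show w ∉ C ∪ D by simp [Set.mem_union, nC, nD]),
          ncard_singdiff_not (show w ∉ A ∪ D by simp [Set.mem_union, nA, nD]),
          ncard_singdiff_not (show w ∉ A ∪ C ∪ D by simp [Set.mem_union, nA, nC, nD]),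
          ncard_singdiff_mem (show w ∈ A ∪ B ∪ C from Or.inl (Or.inr hwX))]
      · intro h1
        rw [ncard_intersing_not nA] at hsplitA
        rw [ncard_singdiff_not (show w ∉ A ∪ C ∪ D by simp [Set.mem_union, nA, nC, nD]),
          ncard_singdiff_mem (show w ∈ A ∪ B ∪ C from Or.inl (Or.inr hwX)),
          ncard_singdiff_mem (show w ∈ B ∪ C ∪ D from Or.inl (Or.inl hwX)),
          ncard_singdiff_mem (show w ∈ A ∪ B from Or.inr hwX),
          ncard_singdiff_not (show w ∉ A ∪ D by simp [Set.mem_union, nA, nD])]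
        omega
      · intro h1
        rw [ncard_intersing_not nA] at hsplitA
        rw [ncard_singdiff_not (show w ∉ A ∪ C ∪ D by simp [Set.mem_union, nA, nC, nD]),
          ncard_singdiff_mem (show w ∈ A ∪ B ∪ C from Or.inl (Or.inr hwX)),
          ncard_singdiff_mem (show w ∈ B ∪ C ∪ D from Or.inl (Or.inl hwX)),
          ncard_singdiff_mem (show w ∈ A ∪ B from Or.inr hwX),
          ncard_singdiff_not (show w ∉ A ∪ D by simp [Set.mem_union, nA, nD])]
        omega
    · have nA : w ∉ A := Set.disjoint_left.mp dAC.symm hwX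
      have nB : w ∉ B := Set.disjoint_left.mp dBC.symm hwX
      have nD : w ∉ D := Set.disjoint_left.mp dCD hwX
      refine master hor hσ' hcov dAB dAC dAD dBC dBD dCD subset_rfl hW3 hb5 hc5 hd5 hspec ?_ ?_ ?_
      · rw [ncard_intersing_not nA, ncard_intersing_mem hwX,
          ncard_singdiff_not (show w ∉ A ∪ B by simp [Set.mem_union, nA, nB]),
          ncard_singdiff_mem (show w ∈ B ∪ C from Or.inr hwX),
          ncard_singdiff_mem (show w ∈ C ∪ D from Or.inl hwX),
          ncard_singdiff_not (show w ∉ A ∪ D by simp [Set.mem_union, nA, nD]),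
          ncard_singdiff_mem (show w ∈ A ∪ C ∪ D from Or.inl (Or.inr hwX)),
          ncard_singdiff_mem (show w ∈ A ∪ B ∪ C from Or.inr hwX)]
      · intro h1
        rw [ncard_intersing_not nA] at hsplitA
        rw [ncard_singdiff_mem (show w ∈ A ∪ C ∪ D from Or.inl (Or.inr hwX)),
          ncard_singdiff_mem (show w ∈ A ∪ B ∪ C from Or.inr hwX),
          ncard_singdiff_mem (show w ∈ B ∪ C ∪ D from Or.inl (Or.inr hwX)),
          ncard_singdiff_not (show w ∉ A ∪ B by simp [Set.mem_union, nA, nB]),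
          ncard_singdiff_not (show w ∉ A ∪ D by simp [Set.mem_union, nA, nD])]
        omega
      · intro h1
        rw [ncard_intersing_not nA] at hsplitA
        rw [ncard_singdiff_mem (show w ∈ A ∪ C ∪ D from Or.inl (Or.inr hwX)),
          ncard_singdiff_mem (show w ∈ A ∪ B ∪ C from Or.inr hwX),
          ncard_singdiff_mem (show w ∈ B ∪ C ∪ D from Or.inl (Or.inr hwX)),
          ncard_singdiff_not (show w ∉ A ∪ B by simp [Set.mem_union, nA, nB]),
          ncard_singdiff_not (show w ∉ A ∪ D by simp [Set.mem_union, nA, nD])]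
        omega
    · have nA : w ∉ A := Set.disjoint_left.mp dAD.symm hwX
      have nB : w ∉ B := Set.disjoint_left.mp dBD.symm hwX
      have nC : w ∉ C := Set.disjoint_left.mp dCD.symm hwX
      refine master hor hσ' hcov dAB dAC dAD dBC dBD dCD subset_rfl hW3 hb5 hc5 hd5 hspec ?_ ?_ ?_
      · rw [ncard_intersing_not nA, ncard_intersing_not nC,
          ncard_singdiff_not (show w ∉ A ∪ B by simp [Set.mem_union, nA, nB]),
          ncard_singdiff_not (show w ∉ B ∪ C by simp [Set.mem_union, nB, nC]),
          ncard_singdiff_mem (show w ∈ C ∪ D from Or.inr hwX),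
          ncard_singdiff_mem (show w ∈ A ∪ D from Or.inr hwX),
          ncard_singdiff_mem (show w ∈ A ∪ C ∪ D from Or.inr hwX),
          ncard_singdiff_not (show w ∉ A ∪ B ∪ C by simp [Set.mem_union, nA, nB, nC])]
      · intro h1
        rw [ncard_intersing_not nA] at hsplitA
        rw [ncard_singdiff_mem (show w ∈ A ∪ C ∪ D from Or.inr hwX),
          ncard_singdiff_not (show w ∉ A ∪ B ∪ C by simp [Set.mem_union, nA, nB, nC]),
          ncard_singdiff_mem (show w ∈ B ∪ C ∪ D from Or.inr hwX),
          ncard_singdiff_not (show w ∉ A ∪ B by simp [Set.mem_union, nA, nB]),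
          ncard_singdiff_mem (show w ∈ A ∪ D from Or.inr hwX)]
        omega
      · intro h1
        rw [ncard_intersing_not nA] at hsplitA
        rw [ncard_singdiff_mem (show w ∈ A ∪ C ∪ D from Or.inr hwX),
          ncard_singdiff_not (show w ∉ A ∪ B ∪ C by simp [Set.mem_union, nA, nB, nC]),
          ncard_singdiff_mem (show w ∈ B ∪ C ∪ D from Or.inr hwX),
          ncard_singdiff_not (show w ∉ A ∪ B by simp [Set.mem_union, nA, nB]),
          ncard_singdiff_mem (show w ∈ A ∪ D from Or.inr hwX)]
        omega
  · -- triangle case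
    set T : Set V := {u, v, z} with hTdef
    have hmemT : ∀ t, (t = u ∨ t = v ∨ t = z) → t ∈ T := by
      intro t ht
      rcases ht with h | h | h <;> simp [hTdef, h]
    have hspec : ∀ p q, SpecialArc G A B C D p q →
        (p ∈ T ∧ q ∈ T) ∨ p ∈ (∅ : Set V) ∨ q ∈ (∅ : Set V) := by
      intro p q h
      obtain ⟨h1, h2⟩ := hT p q h
      exact Or.inl ⟨hmemT p h1, hmemT q h2⟩
    have hW3 : T.ncard ≤ 3 := by
      have h1 := Set.ncard_insert_le u ({v, z} : Set V)
      have h2 := Set.ncard_insert_le v ({z} : Set V)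
      have h3 : ({z} : Set V).ncard = 1 := Set.ncard_singleton z
      simp only [hTdef]
      omega
    have hAT3 : (A ∩ T).ncard ≤ 3 :=
      le_trans (Set.ncard_le_ncard Set.inter_subset_right (Set.toFinite _)) hW3
    have hsplitA := ncard_split A T
    refine master hor hσ' hcov dAB dAC dAD dBC dBD dCD (Set.empty_subset T) hW3 hb5 hc5 hd5
      hspec ?_ ?_ ?_
    · simp only [Set.empty_diff, Set.ncard_empty, add_zero]
      have hdisj : Disjoint (A ∩ T) (C ∩ T) :=
        dAC.mono Set.inter_subset_left Set.inter_subset_left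
      have h1 : (A ∩ T).ncard + (C ∩ T).ncard = ((A ∩ T) ∪ (C ∩ T)).ncard :=
        (Set.ncard_union_eq hdisj (Set.toFinite _) (Set.toFinite _)).symm
      have h2 : ((A ∩ T) ∪ (C ∩ T)).ncard ≤ T.ncard :=
        Set.ncard_le_ncard (Set.union_subset Set.inter_subset_right Set.inter_subset_right)
          (Set.toFinite _)
      omega
    · intro h1
      simp only [Set.empty_diff, Set.ncard_empty, add_zero]
      omega
    · intro h1
      simp only [Set.empty_diff, Set.ncard_empty, add_zero]
      -- A ∩ T has at most 2 elements since u, v are not both in A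
      have hnotboth : ¬ (u ∈ A ∧ v ∈ A) := by
        rintro ⟨huA, hvA⟩
        rcases hsp.2 with ⟨-, h2⟩ | ⟨h2, -⟩
        · rcases h2 with h2 | h2
          · exact (Set.disjoint_left.mp dAC hvA) h2
          · exact (Set.disjoint_left.mp dAD hvA) h2
        · rcases h2 with h2 | h2
          · exact (Set.disjoint_left.mp dAB huA) h2
          · exact (Set.disjoint_left.mp dAC huA) h2
      have hAT2 : (A ∩ T).ncard ≤ 2 := by
        by_cases huA : u ∈ A
        · have hvA : v ∉ A := fun h => hnotboth ⟨huA, h⟩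
          have hsub : A ∩ T ⊆ ({u, z} : Set V) := by
            rintro x ⟨hxA, hxT⟩
            rcases hxT with h | h | h
            · exact Or.inl h
            · exact absurd (h ▸ hxA) hvA
            · exact Or.inr h
          refine le_trans (Set.ncard_le_ncard hsub (Set.toFinite _)) ?_
          have := Set.ncard_insert_le u ({z} : Set V)
          have h3 : ({z} : Set V).ncard = 1 := Set.ncard_singleton z
          omega
        · have hsub : A ∩ T ⊆ ({v, z} : Set V) := by
            rintro x ⟨hxA, hxT⟩
            rcases hxT with h | h | h
            · exact absurd (h ▸ hxA) huA
            · exact Or.inl h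
            · exact Or.inr h
          refine le_trans (Set.ncard_le_ncard hsub (Set.toFinite _)) ?_
          have := Set.ncard_insert_le v ({z} : Set V)
          have h3 : ({z} : Set V).ncard = 1 := Set.ncard_singleton z
          omega
      omega
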